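/- Let p and q be probability density functions on ℝ with common support R, and suppose the differential Shannon cross-entropy h(p;q) is finite and the differential Rényi cross-entropy h_α(p;q) is well defined for α > 1 near 1. Then lim_{α ↓ 1} h_α(p;q) = h(p;q), i.e., the differential Rényi cross-entropy of order α converges to the differential Shannon cross-entropy as α tends to 1 from above. -/

import Mathlib

open MeasureTheory Filter Topology Set

lemma exp_slope_bound (t s s0 : ℝ) (hs : 0 < s) (hss0 : s ≤ s0) :
    |(Real.exp (s * t) - 1) / s| ≤ |t| + (Real.exp (s0 * t) + 1) / s0 := by
  have hs0 : 0 < s0 := hs.trans_le hss0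
  have hlow : t ≤ (Real.exp (s * t) - 1) / s := by
    rw [le_div_iff₀ hs]
    have := Real.add_one_le_exp (s * t)
    linarith
  have hup : (Real.exp (s * t) - 1) / s ≤ (Real.exp (s0 * t) - 1) / s0 := by
    have hθ : (0:ℝ) ≤ s / s0 := le_of_lt (div_pos hs hs0)
    have hθ1 : s / s0 ≤ 1 := (div_le_one hs0).mpr hss0
    have hconv := convexOn_exp.2 (mem_univ (s0 * t)) (mem_univ (0:ℝ))
      hθ (by linarith : (0:ℝ) ≤ 1 - s / s0) (by ring)
    simp only [smul_eq_mul, mul_zero, add_zero, Real.exp_zero, mul_one] at hconv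
    have hst : s / s0 * (s0 * t) = s * t := by field_simp
    rw [hst] at hconv
    rw [div_le_div_iff₀ hs hs0]
    have hss0' : s / s0 * s0 = s := by field_simp
    nlinarith [Real.exp_pos (s0 * t)]
  have h1 : (Real.exp (s0 * t) - 1) / s0 ≤ (Real.exp (s0 * t) + 1) / s0 := by
    gcongr
    linarith
  rw [abs_le]
  constructor
  · have h2 : -|t| ≤ t := neg_abs_le t
    have hU : (0:ℝ) ≤ (Real.exp (s0 * t) + 1) / s0 := by positivity
    linarith
  · have h2 : t ≤ |t| := le_abs_self t
    have h3 : (0:ℝ) ≤ |t| := abs_nonneg t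
    linarith

lemma exp_slope_tendsto (t : ℝ) :
    Tendsto (fun s => (Real.exp (s * t) - 1) / s) (𝓝[≠] (0:ℝ)) (𝓝 t) := by
  have hd : HasDerivAt (fun s : ℝ => Real.exp (s * t)) t 0 := by
    have h1 : HasDerivAt (fun s : ℝ => s * t) t 0 := by
      simpa using (hasDerivAt_id (0:ℝ)).mul_const t
    have := h1.exp
    simpa using this
  have h := hasDerivAt_iff_tendsto_slope.mp hd
  apply h.congr'
  filter_upwards [self_mem_nhdsWithin] with s hs
  simp [slope_def_field, Real.exp_zero]

lemma log_slope_tendsto :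
    Tendsto (fun y : ℝ => Real.log y / (y - 1)) (𝓝[≠] (1:ℝ)) (𝓝 1) := by
  have hd : HasDerivAt Real.log 1 1 := by
    simpa using Real.hasDerivAt_log (one_ne_zero)
  have h := hasDerivAt_iff_tendsto_slope.mp hd
  apply h.congr'
  filter_upwards [self_mem_nhdsWithin] with y hy
  simp [slope_def_field, Real.log_one]

theorem stmt_1
    (p q : ℝ → ℝ) (R : Set ℝ) (hR : MeasurableSet R)
    (hp_meas : Measurable p) (hq_meas : Measurable q)
    (hp_nonneg : ∀ x, 0 ≤ p x) (hq_nonneg : ∀ x, 0 ≤ q x)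
    (hp_pos : ∀ x ∈ R, 0 < p x) (hq_pos : ∀ x ∈ R, 0 < q x)
    (hp_int : IntegrableOn p R) (hq_int : IntegrableOn q R)
    (hp_one : ∫ x in R, p x = 1) (hq_one : ∫ x in R, q x = 1)
    (h_fin : IntegrableOn (fun x => p x * Real.log (q x)) R)
    (h_def : ∃ γ > (1 : ℝ), ∀ α ∈ Set.Ioo (1 : ℝ) γ,
      IntegrableOn (fun x => p x * q x ^ (α - 1)) R) :
    Tendsto (fun α : ℝ => (1 / (1 - α)) * Real.log (∫ x in R, p x * q x ^ (α - 1)))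
      (𝓝[>] 1) (𝓝 (-∫ x in R, p x * Real.log (q x))) := by
  obtain ⟨γ, hγ, hint⟩ := h_def
  set s0 : ℝ := (γ - 1) / 2 with hs0def
  have hs0 : 0 < s0 := by simp only [hs0def]; linarith
  have hα0 : (1 + s0) ∈ Set.Ioo (1:ℝ) γ := by
    constructor
    · linarith
    · rw [hs0def]; linarith
  have h1 : IntegrableOn (fun x => p x * q x ^ s0) R := by
    have := hint (1 + s0) hα0
    simpa using this
  set I : ℝ := ∫ x in R, p x * Real.log (q x) with hIdef
  set φ : ℝ → ℝ → ℝ := fun α x => p x * ((q x ^ (α - 1) - 1) / (α - 1)) with hφdef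
  set F : ℝ → ℝ := fun α => ∫ x in R, p x * q x ^ (α - 1) with hFdef
  have hlim1 : Tendsto (fun α : ℝ => α - 1) (𝓝 (1:ℝ)) (𝓝 0) := by
    have := ((continuous_sub_right (1:ℝ)).tendsto 1)
    simpa using this
  -- Step A: DCT
  have stepA : Tendsto (fun α => ∫ x in R, φ α x) (𝓝[>] 1) (𝓝 I) := by
    apply tendsto_integral_filter_of_dominated_convergence
      (fun x => p x * (|Real.log (q x)| + (q x ^ s0 + 1) / s0))
    · filter_upwards [self_mem_nhdsWithin] with α hα
      apply AEStronglyMeasurable.mul (hp_meas.aestronglyMeasurable.restrict)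
      apply Measurable.aestronglyMeasurable
      fun_prop
    · filter_upwards [Ioc_mem_nhdsGT_of_mem (show (1:ℝ) ∈ Set.Ico 1 (1 + s0) by
        constructor
        · exact le_refl _
        · linarith)] with α hα
      filter_upwards [ae_restrict_mem hR] with x hx
      have hqx : 0 < q x := hq_pos x hx
      have hrw : q x ^ (α - 1) = Real.exp ((α - 1) * Real.log (q x)) := by
        rw [Real.rpow_def_of_pos hqx, mul_comm]
      rw [Real.norm_eq_abs, hφdef]
      simp only
      rw [abs_mul, abs_of_nonneg (hp_nonneg x), hrw]
      have hb := exp_slope_bound (Real.log (q x)) (α - 1) s0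
        (by linarith [hα.1]) (by linarith [hα.2])
      have hrw2 : q x ^ s0 = Real.exp (s0 * Real.log (q x)) := by
        rw [Real.rpow_def_of_pos hqx, mul_comm]
      rw [hrw2]
      exact mul_le_mul_of_nonneg_left hb (hp_nonneg x)
    · have e1 : IntegrableOn (fun x => p x * |Real.log (q x)|) R := by
        refine IntegrableOn.congr_fun h_fin.abs (fun x hx => ?_) hR
        simp [abs_mul, abs_of_nonneg (hp_nonneg x)]
      have e2 : IntegrableOn (fun x => p x * ((q x ^ s0 + 1) / s0)) R := by
        have h2 : IntegrableOn (fun x => (p x * q x ^ s0 + p x) / s0) R :=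
          (h1.add hp_int).div_const s0
        refine IntegrableOn.congr_fun h2 (fun x hx => ?_) hR
        field_simp
      refine IntegrableOn.congr_fun (e1.add e2) (fun x hx => ?_) hR
      simp only [Pi.add_apply]
      ring
    · filter_upwards [ae_restrict_mem hR] with x hx
      have hqx : 0 < q x := hq_pos x hx
      have key : Tendsto (fun α : ℝ => (q x ^ (α - 1) - 1) / (α - 1)) (𝓝[>] 1)
          (𝓝 (Real.log (q x))) := by
        have hmap : Tendsto (fun α : ℝ => α - 1) (𝓝[>] (1:ℝ)) (𝓝[≠] (0:ℝ)) := by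
          have hsub : Tendsto (fun α : ℝ => α - 1) (𝓝[>] (1:ℝ)) (𝓝[>] (0:ℝ)) := by
            rw [tendsto_nhdsWithin_iff]
            refine ⟨hlim1.mono_left nhdsWithin_le_nhds, ?_⟩
            filter_upwards [self_mem_nhdsWithin] with α hα
            simp only [Set.mem_Ioi] at *
            linarith
          refine hsub.mono_right (nhdsWithin_mono _ ?_)
          intro y hy
          simp only [Set.mem_Ioi] at hy
          simp only [Set.mem_compl_iff, Set.mem_singleton_iff]
          exact ne_of_gt hy
        have hcomp := (exp_slope_tendsto (Real.log (q x))).comp hmap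
        apply hcomp.congr
        intro α
        simp only [Function.comp]
        rw [Real.rpow_def_of_pos hqx, mul_comm]
      have := tendsto_const_nhds.mul key (f := fun _ : ℝ => p x) (x := 𝓝[>] (1:ℝ))
      exact this
  -- Step B: eventual identity F α = 1 + (α-1) * ∫ φ α
  have hev : ∀ᶠ α in 𝓝[>] (1:ℝ), F α - 1 = (α - 1) * ∫ x in R, φ α x := by
    filter_upwards [Ioo_mem_nhdsGT_of_mem (show (1:ℝ) ∈ Set.Ico 1 γ by
      constructor
      · exact le_refl _
      · linarith)] with α hα
    simp only [Set.mem_Ioo] at hα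
    have hne : α - 1 ≠ 0 := by intro h; linarith [hα.1]
    have hintα := hint α ⟨hα.1, hα.2⟩
    have hφint : (∫ x in R, φ α x)
        = ((∫ x in R, p x * q x ^ (α - 1)) - ∫ x in R, p x) / (α - 1) := by
      rw [← integral_sub hintα hp_int, ← integral_div]
      apply setIntegral_congr_fun hR
      intro x hx
      simp only [hφdef]
      field_simp
    rw [hφint, hp_one, hFdef]
    field_simp
  have stepB : Tendsto F (𝓝[>] 1) (𝓝 1) := by
    have h0 : Tendsto (fun α : ℝ => 1 + (α - 1) * ∫ x in R, φ α x) (𝓝[>] 1)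
        (𝓝 (1 + 0 * I)) :=
      Tendsto.add tendsto_const_nhds ((hlim1.mono_left nhdsWithin_le_nhds).mul stepA)
    simp only [zero_mul, add_zero] at h0
    apply h0.congr'
    filter_upwards [hev] with α hα
    linarith [hα]
  -- G and its continuity at 1
  set G : ℝ → ℝ := fun y => if y = 1 then 1 else Real.log y / (y - 1) with hGdef
  have hGcont : Tendsto G (𝓝 (1:ℝ)) (𝓝 1) := by
    have hsup : Tendsto G (𝓝[≠] (1:ℝ) ⊔ pure 1) (𝓝 1) := by
      rw [tendsto_sup]
      constructor
      · apply log_slope_tendsto.congr'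
        filter_upwards [self_mem_nhdsWithin] with y hy
        simp only [Set.mem_compl_iff, Set.mem_singleton_iff] at hy
        simp [hGdef, hy]
      · rw [tendsto_pure_left]
        intro s hs
        have : G 1 = 1 := by simp [hGdef]
        rw [this]
        exact mem_of_mem_nhds hs
    rwa [nhdsNE_sup_pure] at hsup
  -- Step C: combine
  have stepC : Tendsto (fun α : ℝ => -(((F α - 1) / (α - 1)) * G (F α))) (𝓝[>] 1)
      (𝓝 (-I)) := by
    apply Tendsto.neg
    have hq1 : Tendsto (fun α : ℝ => (F α - 1) / (α - 1)) (𝓝[>] 1) (𝓝 I) := by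
      apply stepA.congr'
      filter_upwards [hev, self_mem_nhdsWithin] with α hα hα'
      simp only [Set.mem_Ioi] at hα'
      have hne : α - 1 ≠ 0 := by intro h; linarith
      rw [hα]
      field_simp
    have hq2 : Tendsto (fun α : ℝ => G (F α)) (𝓝[>] 1) (𝓝 1) := hGcont.comp stepB
    simpa using hq1.mul hq2
  apply stepC.congr'
  filter_upwards [self_mem_nhdsWithin] with α hα
  simp only [Set.mem_Ioi] at hα
  have hne : α - 1 ≠ 0 := by intro h; linarith
  have hne' : (1:ℝ) - α ≠ 0 := by intro h; linarith
  have hFα : (∫ x in R, p x * q x ^ (α - 1)) = F α := rfl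
  by_cases hF : F α = 1
  · rw [hFα, hF]
    simp [hGdef]
  · rw [hFα]
    simp only [hGdef, if_neg hF]
    have hFne : F α - 1 ≠ 0 := fun h => hF (by linarith)
    field_simp
    ring
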